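/- arXiv:2102.04350 — 2 statements merged into one kernel-verified Lean document; each statement's English description precedes it below -/
import Mathlib

section
/- Let V be a nonempty finite type, N : V → Finset V an assignment of a nonempty neighbor set to each node, and f : ℕ with 1 ≤ f and f ≤ (N u).card for every u. Equip Ω = ∀ u : V, {s : Finset V // s ∈ (N u).powersetCard f} with the product P of the uniform probability measures on each coordinate (rows sampled independently). Let k ≥ 1 and let p : Fin (k+1) → V be a walk such that the restriction of p to the first k positions is injective (the nodes p 0, …, p (k-1) are pairwise distinct) and p i.succ ∈ N (p i.castSucc) for every i : Fin k. Then P {ω | ∀ i : Fin k, p i.succ ∈ (ω (p i.castSucc) : Finset V)} = ∏_{i : Fin k} (f : ℝ) / (N (p i.castSucc)).card. -/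
open MeasureTheory

/-- Every set of finsets is measurable (discrete σ-algebra on `Finset α`). -/
local instance finsetMeasurableSpace (α : Type*) : MeasurableSpace (Finset α) := ⊤

private lemma aux_subtype_measurable {α : Type*} [m : MeasurableSpace α]
    (hm : ∀ s : Set α, MeasurableSet s) {P : α → Prop} (S : Set (Subtype P)) :
    MeasurableSet S :=
  ⟨Subtype.val '' S, hm _, by rw [Set.preimage_image_eq _ Subtype.val_injective]⟩

private lemma aux_card_filter {V : Type*} [DecidableEq V] (A : Finset V) (x : V)
    (hx : x ∈ A) (f : ℕ) (hf : 1 ≤ f) :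
    ((A.powersetCard f).filter (fun t => x ∈ t)).card = (A.card - 1).choose (f - 1) := by
  rw [← Finset.card_erase_of_mem hx, ← Finset.card_powersetCard]
  refine Finset.card_bij' (fun t _ => t.erase x) (fun t _ => insert x t) ?_ ?_ ?_ ?_
  · intro t ht
    simp only [Finset.mem_filter, Finset.mem_powersetCard] at ht ⊢
    refine ⟨Finset.erase_subset_erase x ht.1.1, ?_⟩
    rw [Finset.card_erase_of_mem ht.2, ht.1.2]
  · intro t ht
    simp only [Finset.mem_powersetCard] at ht
    have hxt : x ∉ t := fun h => (Finset.mem_erase.mp (ht.1 h)).1 rfl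
    simp only [Finset.mem_filter, Finset.mem_powersetCard]
    refine ⟨⟨?_, ?_⟩, Finset.mem_insert_self x t⟩
    · exact Finset.insert_subset hx (ht.1.trans (Finset.erase_subset x A))
    · rw [Finset.card_insert_of_notMem hxt, ht.2]
      omega
  · intro t ht
    simp only [Finset.mem_filter] at ht
    exact Finset.insert_erase ht.2
  · intro t ht
    simp only [Finset.mem_powersetCard] at ht
    have hxt : x ∉ t := fun h => (Finset.mem_erase.mp (ht.1 h)).1 rfl
    exact Finset.erase_insert hxt

/-- Path-existence probability from the proof of Proposition 5 (UnbiasedMP):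
when GTTF independently samples, for each node `u`, a uniformly random
`f`-element subset of its neighbor set `N u` as the retained outgoing edges, a
fixed walk `p` through pairwise distinct nodes survives in the sampled graph
with probability `∏ i, f / |N (p i)|`. -/
theorem gttf_path_existence_probability
    {V : Type*} [Fintype V] [Nonempty V] [DecidableEq V]
    (N : V → Finset V) (hN : ∀ u, (N u).Nonempty)
    (f : ℕ) (hf1 : 1 ≤ f) (hf2 : ∀ u, f ≤ (N u).card)
    (P : Measure (∀ u : V, {s : Finset V // s ∈ (N u).powersetCard f}))
    (hP : P = Measure.pi (fun u =>
      (Fintype.card {s : Finset V // s ∈ (N u).powersetCard f} : ENNReal)⁻¹ •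
        Measure.count))
    (k : ℕ) (hk : 1 ≤ k) (p : Fin (k + 1) → V)
    (hinj : Function.Injective (fun i : Fin k => p i.castSucc))
    (hwalk : ∀ i : Fin k, p i.succ ∈ N (p i.castSucc)) :
    P {ω | ∀ i : Fin k, p i.succ ∈ (ω (p i.castSucc) : Finset V)}
      = ENNReal.ofReal (∏ i : Fin k, (f : ℝ) / ((N (p i.castSucc)).card : ℝ)) := by
  classical
  set X := fun u : V => {s : Finset V // s ∈ (N u).powersetCard f} with hXdef
  have hms : ∀ u (S : Set (X u)), MeasurableSet S :=
    fun u S => aux_subtype_measurable (fun s => MeasurableSpace.measurableSet_top) S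
  haveI hsing : ∀ u, MeasurableSingletonClass (X u) := fun u => ⟨fun x => hms u _⟩
  have hcardX : ∀ u, Fintype.card (X u) = (N u).card.choose f := fun u => by
    rw [Fintype.card_coe, Finset.card_powersetCard]
  have hXpos : ∀ u, 0 < Fintype.card (X u) := fun u => by
    rw [hcardX]; exact Nat.choose_pos (hf2 u)
  set μ : ∀ u, Measure (X u) :=
    fun u => (Fintype.card (X u) : ENNReal)⁻¹ • (Measure.count : Measure (X u)) with hμdef
  -- count of a set in a fintype
  have hcount : ∀ u (S : Set (X u)), (Measure.count S : ENNReal) = (S.ncard : ENNReal) := by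
    intro u S
    rw [Measure.count_apply_finite S (Set.toFinite S), Set.ncard_eq_toFinset_card]
  have happly : ∀ u (S : Set (X u)),
      μ u S = (S.ncard : ENNReal) / (Fintype.card (X u) : ENNReal) := by
    intro u S
    rw [hμdef]
    simp only [Measure.smul_apply, smul_eq_mul, hcount u S]
    rw [div_eq_mul_inv, mul_comm]
  haveI hfin : ∀ u, IsFiniteMeasure (μ u) := fun u => ⟨by
    rw [happly]
    exact ENNReal.div_lt_top (by simp) (by exact_mod_cast (hXpos u).ne')⟩
  set t : ∀ u, Set (X u) :=
    fun u => {s : X u | ∀ i : Fin k, p i.castSucc = u → p i.succ ∈ (s : Finset V)} with htdef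
  have hev : {ω : ∀ u, X u | ∀ i : Fin k, p i.succ ∈ ((ω (p i.castSucc) : Finset V))}
      = Set.univ.pi t := by
    ext ω
    simp only [Set.mem_setOf_eq, Set.mem_pi, Set.mem_univ, forall_true_left, htdef]
    constructor
    · intro h u i hi; subst hi; exact h i
    · intro h i; exact h (p i.castSucc) i rfl
  rw [hP, hev, Measure.pi_pi]
  set D : Finset V := Finset.univ.image (fun i : Fin k => p i.castSucc) with hDdef
  have hfac1 : ∀ u ∈ Finset.univ, u ∉ D → μ u (t u) = 1 := by
    intro u _ hu
    have : t u = Set.univ := by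
      ext s
      simp only [htdef, Set.mem_setOf_eq, Set.mem_univ, iff_true]
      intro i hi
      exact (hu (Finset.mem_image.mpr ⟨i, Finset.mem_univ i, hi⟩)).elim
    rw [this, happly, Set.ncard_univ, Nat.card_eq_fintype_card,
      ENNReal.div_self (by exact_mod_cast (hXpos u).ne') (by simp)]
  have hfac2 : ∀ j : Fin k,
      μ (p j.castSucc) (t (p j.castSucc))
        = ENNReal.ofReal ((f : ℝ) / ((N (p j.castSucc)).card : ℝ)) := by
    intro j
    set u := p j.castSucc with hu
    have hteq : t u = {s : X u | p j.succ ∈ (s : Finset V)} := by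
      ext s
      simp only [htdef, Set.mem_setOf_eq]
      constructor
      · intro h; exact h j rfl
      · intro h i hi
        have : i = j := hinj (by simpa using hi)
        subst this; exact h
    have himg : (Subtype.val '' {s : X u | p j.succ ∈ (s : Finset V)})
        = ↑(((N u).powersetCard f).filter (fun t => p j.succ ∈ t)) := by
      ext s
      simp only [Set.mem_image, Set.mem_setOf_eq, Finset.coe_filter, Finset.mem_coe]
      constructor
      · rintro ⟨⟨s', hs'⟩, h1, rfl⟩; exact ⟨hs', h1⟩
      · rintro ⟨h1, h2⟩; exact ⟨⟨s, h1⟩, h2, rfl⟩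
    have hncard : (t u).ncard = ((N u).card - 1).choose (f - 1) := by
      rw [hteq, ← Set.ncard_image_of_injective _ Subtype.val_injective, himg,
        Set.ncard_coe_finset]
      exact aux_card_filter (N u) (p j.succ) (hwalk j) f hf1
    rw [happly, hncard, hcardX]
    have hn1 : 1 ≤ (N u).card := le_trans hf1 (hf2 u)
    have hkey : (N u).card * ((N u).card - 1).choose (f - 1) = (N u).card.choose f * f := by
      have := Nat.add_one_mul_choose_eq ((N u).card - 1) (f - 1)
      simp only [Nat.succ_eq_add_one, Nat.sub_add_cancel hn1, Nat.sub_add_cancel hf1] at this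
      exact this
    have hnn0 : ((N u).card : ENNReal) ≠ 0 := Nat.cast_ne_zero.mpr (by omega)
    have hch0 : ((N u).card.choose f : ENNReal) ≠ 0 := by
      exact_mod_cast (Nat.choose_pos (hf2 u)).ne'
    rw [ENNReal.ofReal_div_of_pos (by exact_mod_cast lt_of_lt_of_le Nat.one_pos hn1),
      ENNReal.ofReal_natCast, ENNReal.ofReal_natCast]
    rw [ENNReal.div_eq_div_iff hnn0 (by simp) hch0 (by simp)]
    exact_mod_cast hkey
  calc ∏ u : V, μ u (t u)
      = ∏ u ∈ D, μ u (t u) := (Finset.prod_subset (Finset.subset_univ D) hfac1).symm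
    _ = ∏ j : Fin k, μ (p j.castSucc) (t (p j.castSucc)) :=
        Finset.prod_image (fun x _ y _ h => hinj h)
    _ = ∏ j : Fin k, ENNReal.ofReal ((f : ℝ) / ((N (p j.castSucc)).card : ℝ)) :=
        Finset.prod_congr rfl (fun j _ => hfac2 j)
    _ = ENNReal.ofReal (∏ i : Fin k, (f : ℝ) / ((N (p i.castSucc)).card : ℝ)) :=
        (ENNReal.ofReal_prod_of_nonneg (fun i _ => by positivity)).symm
end

section
/- Let V be a nonempty finite type and A : Matrix V V ℝ a matrix with entries in {0, 1}. For each u let N u be the Finset of nodes v with A u v = 1, and suppose the graph is α-regular: (N u).card = α for every u, with 1 ≤ f ≤ α. Let C be the finite type of choice functions c : ∀ u : V, {s : Finset V // s ∈ (N u).powersetCard f} (one f-element neighbor subset per node), and for each c define the realized adjacency Ã(c) : Matrix V V ℝ by Ã(c) u v = if v ∈ (c u : Finset V) then 1 else 0. Then for all u v : V: (α : ℝ) * ∑_{c : C} Ã(c) u v = (Fintype.card C : ℝ) * f * A u v; equivalently, the average over all GTTF-realizable adjacency matrices equals (f/α) • A. -/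
open Finset

lemma count_mem_powersetCard {γ : Type*} [DecidableEq γ] (t : Finset γ) (v : γ) (hv : v ∈ t)
    (k : ℕ) :
    ((t.powersetCard (k + 1)).filter (fun s => v ∈ s)).card = (t.card - 1).choose k := by
  rw [← Finset.card_erase_of_mem hv, ← Finset.card_powersetCard]
  refine Finset.card_bij' (fun s _ => s.erase v) (fun s _ => insert v s) ?_ ?_ ?_ ?_
  · intro s hs
    simp only [mem_filter, mem_powersetCard] at hs
    rw [mem_powersetCard]
    exact ⟨fun x hx => Finset.mem_erase.2 ⟨(Finset.mem_erase.1 hx).1,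
        hs.1.1 (Finset.mem_erase.1 hx).2⟩,
      by rw [Finset.card_erase_of_mem hs.2, hs.1.2]; omega⟩
  · intro s hs
    simp only [mem_powersetCard] at hs
    have hvs : v ∉ s := fun h => (Finset.mem_erase.1 (hs.1 h)).1 rfl
    simp only [mem_filter, mem_powersetCard]
    exact ⟨⟨fun x hx => by
        rcases Finset.mem_insert.1 hx with h | h
        · exact h ▸ hv
        · exact Finset.mem_of_mem_erase (hs.1 h),
      by rw [Finset.card_insert_of_notMem hvs, hs.2]⟩, Finset.mem_insert_self _ _⟩
  · intro s hs
    simp only [mem_filter] at hs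
    exact Finset.insert_erase hs.2
  · intro s hs
    simp only [mem_powersetCard] at hs
    have hvs : v ∉ s := fun h => (Finset.mem_erase.1 (hs.1 h)).1 rfl
    exact Finset.erase_insert hvs


/-- Claim from the proof of Proposition 6 (UnbiasedLearnMP): for an α-regular
graph (every node has exactly α out-neighbors), the average over all
GTTF-realizable adjacency matrices — each retaining, for every node, some
`f`-element subset of its α outgoing neighbors — is proportional entrywise to
the full adjacency matrix `A`, with proportionality constant `f/α`:
`α * ∑_c Ã(c) u v = |C| * f * A u v`. -/
theorem gttf_average_realizable_adjacency
    {V : Type*} [Fintype V] [Nonempty V] [DecidableEq V]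
    (A : Matrix V V ℝ) (h01 : ∀ a b, A a b = 0 ∨ A a b = 1)
    (N : V → Finset V) (hN : ∀ a b, b ∈ N a ↔ A a b = 1)
    (α : ℕ) (hreg : ∀ u, (N u).card = α)
    (f : ℕ) (hf1 : 1 ≤ f) (hf2 : f ≤ α) :
    ∀ u v : V,
      (α : ℝ) *
          ∑ c : (∀ w : V, {s : Finset V // s ∈ (N w).powersetCard f}),
            (if v ∈ (c u : Finset V) then (1 : ℝ) else 0)
        = (Fintype.card (∀ w : V, {s : Finset V // s ∈ (N w).powersetCard f}) : ℝ) *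
            (f : ℝ) * A u v := by
  intro u v
  set β : V → Type _ := fun w => {s : Finset V // s ∈ (N w).powersetCard f} with hβ
  -- split off coordinate u
  have hsum : ∑ c : (∀ w, β w), (if v ∈ (c u : Finset V) then (1 : ℝ) else 0)
      = ∑ p : β u × (∀ w : {w // w ≠ u}, β w),
          (if v ∈ (p.1 : Finset V) then (1 : ℝ) else 0) := by
    apply Fintype.sum_equiv (Equiv.piSplitAt u β)
    intro c
    rfl
  have hcard : Fintype.card (∀ w, β w)
      = Fintype.card (β u) * Fintype.card (∀ w : {w // w ≠ u}, β w) := by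
    rw [Fintype.card_congr (Equiv.piSplitAt u β), Fintype.card_prod]
  have hprod : ∑ p : β u × (∀ w : {w // w ≠ u}, β w),
      (if v ∈ (p.1 : Finset V) then (1 : ℝ) else 0)
      = (∑ a : β u, (if v ∈ (a : Finset V) then (1 : ℝ) else 0))
          * Fintype.card (∀ w : {w // w ≠ u}, β w) := by
    rw [Fintype.sum_prod_type, Finset.sum_mul]
    refine Finset.sum_congr rfl fun a _ => ?_
    dsimp only
    show (∑ _y : (∀ w : {w // w ≠ u}, β w), (if v ∈ (a : Finset V) then (1 : ℝ) else 0)) = _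
    rw [Finset.sum_const, Finset.card_univ, nsmul_eq_mul, mul_comm]
  rw [hsum, hprod]
  have hsub : ∑ a : β u, (if v ∈ (a : Finset V) then (1 : ℝ) else 0)
      = (((N u).powersetCard f).filter (fun s => v ∈ s)).card := by
    rw [Finset.sum_coe_sort ((N u).powersetCard f)
      (fun s => if v ∈ s then (1 : ℝ) else 0)]
    rw [Finset.sum_boole]
  rw [hsub, hcard]
  by_cases hv : v ∈ N u
  · have hA : A u v = 1 := (hN u v).1 hv
    obtain ⟨k, rfl⟩ : ∃ k, f = k + 1 := ⟨f - 1, by omega⟩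
    obtain ⟨a, ha⟩ : ∃ a, α = a + 1 := ⟨α - 1, by omega⟩
    have hcount : ((powersetCard (k + 1) (N u)).filter (fun s => v ∈ s)).card
        = a.choose k := by
      rw [count_mem_powersetCard (N u) v hv k, hreg u, ha]; simp
    have hβu : Fintype.card (β u) = (a + 1).choose (k + 1) := by
      rw [show Fintype.card (β u) = ((N u).powersetCard (k + 1)).card from
        Fintype.card_coe _, Finset.card_powersetCard, hreg u, ha]
    rw [hcount, hβu, hA, ha]
    have key : ((a + 1 : ℕ) : ℝ) * ((a.choose k : ℕ) : ℝ)
        = (((a + 1).choose (k + 1) : ℕ) : ℝ) * ((k + 1 : ℕ) : ℝ) := by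
      exact_mod_cast congrArg (Nat.cast (R := ℝ)) (Nat.add_one_mul_choose_eq a k)
    push_cast at key ⊢
    nlinarith [key, sq_nonneg ((Fintype.card ((w : {w // w ≠ u}) → β w) : ℝ))]
  · have hA : A u v = 0 := by
      rcases h01 u v with h | h
      · exact h
      · exact absurd ((hN u v).2 h) hv
    have hcount : ((powersetCard f (N u)).filter (fun s => v ∈ s)).card = 0 := by
      rw [Finset.card_eq_zero, Finset.filter_eq_empty_iff]
      intro s hs hvs
      exact hv ((Finset.mem_powersetCard.1 hs).1 hvs)
    rw [hcount, hA]
    ring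
end
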